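/- arXiv:1606.01005 — 2 statements merged into one kernel-verified Lean document; each statement's English description precedes it below -/
import Mathlib

section
/- Under Assumptions 1 and 2, let ε > 0 and let k ∈ ℕ be such that R_∞^1 ⊆ (1+ε) • R_k^1. Then α* ≥ (1+ε)⁻¹ · ᾱ_k, where ᾱ_k := sup{α > 0 | α • R_k^1 ⊆ 𝒳}. -/
open Matrix Set Pointwise

namespace RPIScaling

/-- A C-set in `ℝ^p`: convex, compact, containing the origin in its interior. -/
def IsCSet {p : ℕ} (S : Set (Fin p → ℝ)) : Prop :=
  Convex ℝ S ∧ IsCompact S ∧ (0 : Fin p → ℝ) ∈ interior S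

/-- Pontryagin difference `U ⊖ V`. -/
def pontryaginDiff {p : ℕ} (U V : Set (Fin p → ℝ)) : Set (Fin p → ℝ) :=
  {x | ∀ v ∈ V, x + v ∈ U}

/-- Upper-left `r × r` block of `A`. -/
def blockA11 {n r : ℕ} (hrn : r ≤ n) (A : Matrix (Fin n) (Fin n) ℝ) :
    Matrix (Fin r) (Fin r) ℝ :=
  A.submatrix (Fin.castLE hrn) (Fin.castLE hrn)

/-- Upper `r × m` block of `E`. -/
def blockE1 {n m r : ℕ} (hrn : r ≤ n) (E : Matrix (Fin n) (Fin m) ℝ) :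
    Matrix (Fin r) (Fin m) ℝ :=
  E.submatrix (Fin.castLE hrn) id

/-- Lower-right `(n-r) × (n-r)` block of `A`. -/
def blockA22 {n : ℕ} (r : ℕ) (A : Matrix (Fin n) (Fin n) ℝ) :
    Matrix (Fin (n - r)) (Fin (n - r)) ℝ :=
  A.submatrix (fun i => ⟨r + i.1, by have h := i.2; omega⟩)
    (fun i => ⟨r + i.1, by have h := i.2; omega⟩)

/-- The controllability matrix `[E₁, A₁₁E₁, …, A₁₁^{r-1}E₁]` of the pair `(A₁₁, E₁)`. -/
def controllabilityMatrix {n m r : ℕ} (hrn : r ≤ n) (A : Matrix (Fin n) (Fin n) ℝ)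
    (E : Matrix (Fin n) (Fin m) ℝ) : Matrix (Fin r) (Fin r × Fin m) ℝ :=
  Matrix.of fun i p => ((blockA11 hrn A) ^ (p.1 : ℕ) * blockE1 hrn E) i p.2

/-- Assumption 1: block structure of `A` and `E`, controllability of `(A₁₁, E₁)`,
and `𝒳`, `𝒟*` are C-sets. -/
structure Assumption1 {n m r : ℕ} (hrn : r ≤ n) (A : Matrix (Fin n) (Fin n) ℝ)
    (E : Matrix (Fin n) (Fin m) ℝ) (X : Set (Fin n → ℝ)) (D : Set (Fin m → ℝ)) : Prop where
  hn : 0 < n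
  hm : 0 < m
  hr : 0 < r
  lowerLeftA : ∀ i j : Fin n, r ≤ (i : ℕ) → (j : ℕ) < r → A i j = 0
  lowerE : ∀ i : Fin n, r ≤ (i : ℕ) → ∀ j, E i j = 0
  controllable : (controllabilityMatrix hrn A E).rank = r
  hX : IsCSet X
  hD : IsCSet D

/-- All complex eigenvalues of `M` have modulus `< 1`. -/
def StrictlyStable {p : ℕ} (M : Matrix (Fin p) (Fin p) ℝ) : Prop :=
  ∀ μ ∈ spectrum ℂ (M.map (algebraMap ℝ ℂ)), ‖μ‖ < 1

/-- All complex eigenvalues of `M` have modulus `≤ 1`. -/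
def Stable {p : ℕ} (M : Matrix (Fin p) (Fin p) ℝ) : Prop :=
  ∀ μ ∈ spectrum ℂ (M.map (algebraMap ℝ ℂ)), ‖μ‖ ≤ 1

/-- Assumption 2: the eigenvalues of `A₁₁` and `A₂₂` are strictly stable. -/
def Assumption2 {n r : ℕ} (hrn : r ≤ n) (A : Matrix (Fin n) (Fin n) ℝ) : Prop :=
  StrictlyStable (blockA11 hrn A) ∧ StrictlyStable (blockA22 r A)

/-- Assumption 2': the eigenvalues of `A₂₂` are stable. -/
def Assumption2' {n : ℕ} (r : ℕ) (A : Matrix (Fin n) (Fin n) ℝ) : Prop :=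
  Stable (blockA22 r A)

/-- `P` is robust positively invariant for disturbance scaling `α`. -/
def IsRPI {n m : ℕ} (A : Matrix (Fin n) (Fin n) ℝ) (E : Matrix (Fin n) (Fin m) ℝ)
    (X : Set (Fin n → ℝ)) (D : Set (Fin m → ℝ)) (α : ℝ) (P : Set (Fin n → ℝ)) : Prop :=
  P ⊆ X ∧ ∀ x ∈ P, ∀ d ∈ α • D, A.mulVec x + E.mulVec d ∈ P

/-- The maximal RPI set: the union of all RPI sets. -/
def Pmax {n m : ℕ} (A : Matrix (Fin n) (Fin n) ℝ) (E : Matrix (Fin n) (Fin m) ℝ)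
    (X : Set (Fin n → ℝ)) (D : Set (Fin m → ℝ)) (α : ℝ) : Set (Fin n → ℝ) :=
  ⋃₀ {P | IsRPI A E X D α P}

/-- The minimal RPI set: the intersection of all nonempty RPI sets together with the MRPI set. -/
def Pmin {n m : ℕ} (A : Matrix (Fin n) (Fin n) ℝ) (E : Matrix (Fin n) (Fin m) ℝ)
    (X : Set (Fin n → ℝ)) (D : Set (Fin m → ℝ)) (α : ℝ) : Set (Fin n → ℝ) :=
  ⋂₀ ({P | IsRPI A E X D α P ∧ P.Nonempty} ∪ {Pmax A E X D α})

/-- The sequence `S_k^α`. -/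
def Sseq {n m : ℕ} (A : Matrix (Fin n) (Fin n) ℝ) (E : Matrix (Fin n) (Fin m) ℝ)
    (X : Set (Fin n → ℝ)) (D : Set (Fin m → ℝ)) (α : ℝ) : ℕ → Set (Fin n → ℝ)
  | 0 => X
  | k + 1 => A.mulVec ⁻¹' (pontryaginDiff (Sseq A E X D α k) (E.mulVec '' (α • D))) ∩ X

/-- The limit set `S_∞^α`. -/
def Sinf {n m : ℕ} (A : Matrix (Fin n) (Fin n) ℝ) (E : Matrix (Fin n) (Fin m) ℝ)
    (X : Set (Fin n → ℝ)) (D : Set (Fin m → ℝ)) (α : ℝ) : Set (Fin n → ℝ) :=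
  ⋂ k : ℕ, Sseq A E X D α k

/-- The sequence `R_k^α` of reachable sets. -/
def Rseq {n m : ℕ} (A : Matrix (Fin n) (Fin n) ℝ) (E : Matrix (Fin n) (Fin m) ℝ)
    (D : Set (Fin m → ℝ)) (α : ℝ) : ℕ → Set (Fin n → ℝ)
  | 0 => {0}
  | k + 1 => A.mulVec '' (Rseq A E D α k) + E.mulVec '' (α • D)

/-- The limit set `R_∞^α`. -/
def Rinf {n m : ℕ} (A : Matrix (Fin n) (Fin n) ℝ) (E : Matrix (Fin n) (Fin m) ℝ)
    (D : Set (Fin m → ℝ)) (α : ℝ) : Set (Fin n → ℝ) :=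
  ⋃ k : ℕ, Rseq A E D α k

/-- The critical scaling factor `α*`. -/
noncomputable def alphaStar {n m : ℕ} (A : Matrix (Fin n) (Fin n) ℝ)
    (E : Matrix (Fin n) (Fin m) ℝ) (X : Set (Fin n → ℝ)) (D : Set (Fin m → ℝ)) : ℝ :=
  sSup {α : ℝ | 0 < α ∧ Rinf A E D α ⊆ X}

/-- The sequence `Q_k^α` used to characterize the maximal controlled invariant set. -/
def Qseq {n m : ℕ} (A : Matrix (Fin n) (Fin n) ℝ) (E : Matrix (Fin n) (Fin m) ℝ)
    (X : Set (Fin n → ℝ)) (D : Set (Fin m → ℝ)) (α : ℝ) : ℕ → Set (Fin n → ℝ)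
  | 0 => X
  | k + 1 => A.mulVec ⁻¹' (Qseq A E X D α k + -(E.mulVec '' (α • D))) ∩ X

/-- `C` is controlled invariant for input-constraint scaling `α`. -/
def IsCI {n m : ℕ} (A : Matrix (Fin n) (Fin n) ℝ) (E : Matrix (Fin n) (Fin m) ℝ)
    (X : Set (Fin n → ℝ)) (D : Set (Fin m → ℝ)) (α : ℝ) (C : Set (Fin n → ℝ)) : Prop :=
  C ⊆ X ∧ ∀ x ∈ C, ∃ d ∈ α • D, A.mulVec x + E.mulVec d ∈ C

/-- The maximal controlled invariant set: the union of all CI sets. -/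
def Cmax {n m : ℕ} (A : Matrix (Fin n) (Fin n) ℝ) (E : Matrix (Fin n) (Fin m) ℝ)
    (X : Set (Fin n → ℝ)) (D : Set (Fin m → ℝ)) (α : ℝ) : Set (Fin n → ℝ) :=
  ⋃₀ {C | IsCI A E X D α C}

/-- The Minkowski sum `W = ⨁_{k=0}^{M-1} A₁₁^k E₁ 𝒟*`. -/
def Wset {n m r : ℕ} (hrn : r ≤ n) (A : Matrix (Fin n) (Fin n) ℝ)
    (E : Matrix (Fin n) (Fin m) ℝ) (D : Set (Fin m → ℝ)) (M : ℕ) : Set (Fin r → ℝ) :=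
  {w | ∃ d : Fin M → Fin m → ℝ, (∀ i, d i ∈ D) ∧
    w = ∑ i : Fin M, ((blockA11 hrn A) ^ (i : ℕ) * blockE1 hrn E).mulVec (d i)}

lemma mulVec_image_smul {n m : ℕ} (M : Matrix (Fin n) (Fin m) ℝ) (α : ℝ)
    (S : Set (Fin m → ℝ)) : M.mulVec '' (α • S) = α • (M.mulVec '' S) := by
  have := image_smul_set M.mulVecLin α S
  exact this

lemma Rseq_smul {n m : ℕ} (A : Matrix (Fin n) (Fin n) ℝ) (E : Matrix (Fin n) (Fin m) ℝ)
    (D : Set (Fin m → ℝ)) (α : ℝ) : ∀ j, Rseq A E D α j = α • Rseq A E D 1 j := by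
  intro j
  induction j with
  | zero => simp [Rseq, Set.smul_set_singleton]
  | succ j ih =>
      rw [Rseq, Rseq, ih, one_smul, mulVec_image_smul, mulVec_image_smul, smul_add]

lemma Rinf_smul {n m : ℕ} (A : Matrix (Fin n) (Fin n) ℝ) (E : Matrix (Fin n) (Fin m) ℝ)
    (D : Set (Fin m → ℝ)) (α : ℝ) : Rinf A E D α = α • Rinf A E D 1 := by
  simp only [Rinf, Set.smul_set_iUnion]
  exact Set.iUnion_congr fun j => Rseq_smul A E D α j

lemma mulVec_smul_mem_Rinf {n m : ℕ} (A : Matrix (Fin n) (Fin n) ℝ)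
    (E : Matrix (Fin n) (Fin m) ℝ) (D : Set (Fin m → ℝ)) (α : ℝ)
    (d : Fin m → ℝ) (hd : d ∈ D) : E.mulVec (α • d) ∈ Rinf A E D α := by
  refine Set.mem_iUnion.2 ⟨1, ?_⟩
  show E.mulVec (α • d) ∈ A.mulVec '' (Rseq A E D α 0) + E.mulVec '' (α • D)
  refine ⟨A.mulVec 0, ⟨0, rfl, rfl⟩, E.mulVec (α • d), ⟨α • d, Set.smul_mem_smul_set hd, rfl⟩, ?_⟩
  simp [Matrix.mulVec_zero]

lemma exists_E_ne_zero {n m r : ℕ} (hrn : r ≤ n) (A : Matrix (Fin n) (Fin n) ℝ)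
    (E : Matrix (Fin n) (Fin m) ℝ) (hr : 0 < r)
    (hc : (controllabilityMatrix hrn A E).rank = r) :
    ∃ i : Fin n, ∃ j : Fin m, E i j ≠ 0 := by
  by_contra h
  push_neg at h
  have hE1 : blockE1 hrn E = 0 := by ext i j; exact h _ _
  have hcm : controllabilityMatrix hrn A E = 0 := by
    ext i p
    simp [controllabilityMatrix, hE1]
  rw [hcm, Matrix.rank_zero] at hc
  omega

lemma bddAbove_alphaSet {n m r : ℕ} (hrn : r ≤ n)
    (A : Matrix (Fin n) (Fin n) ℝ) (E : Matrix (Fin n) (Fin m) ℝ)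
    (X : Set (Fin n → ℝ)) (D : Set (Fin m → ℝ))
    (hA1 : Assumption1 hrn A E X D) :
    BddAbove {α : ℝ | 0 < α ∧ Rinf A E D α ⊆ X} := by
  obtain ⟨i, j, hij⟩ := exists_E_ne_zero hrn A E hA1.hr hA1.controllable
  obtain ⟨δ, hδ, hball⟩ := Metric.mem_nhds_iff.1 (mem_interior_iff_mem_nhds.1 hA1.hD.2.2)
  set d0 : Fin m → ℝ := Pi.single j 1 with hd0
  set c : ℝ := δ / (2 * (‖d0‖ + 1)) with hc
  have hd0n : (0:ℝ) ≤ ‖d0‖ := norm_nonneg _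
  have hcpos : 0 < c := by positivity
  set d : Fin m → ℝ := c • d0 with hd
  have hdD : d ∈ D := by
    apply hball
    simp only [Metric.mem_ball, dist_zero_right, hd, norm_smul, Real.norm_eq_abs,
      abs_of_pos hcpos]
    calc c * ‖d0‖ ≤ c * (‖d0‖ + 1) := by nlinarith
      _ = δ / 2 := by rw [hc]; field_simp
      _ < δ := by linarith
  have hw : E.mulVec d ≠ 0 := by
    intro hz
    have h1 : E.mulVec d0 ≠ 0 := by
      intro hz0
      have : E.mulVec d0 i = 0 := by rw [hz0]; rfl
      rw [hd0, Matrix.mulVec_single] at this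
      simp at this
      exact hij this
    rw [hd, Matrix.mulVec_smul] at hz
    exact h1 (by simpa [smul_eq_zero, hcpos.ne'] using hz)
  have hwpos : 0 < ‖E.mulVec d‖ := norm_pos_iff.2 hw
  obtain ⟨C, hC⟩ := isBounded_iff_forall_norm_le.1 hA1.hX.2.1.isBounded
  refine ⟨C / ‖E.mulVec d‖, fun α hα => ?_⟩
  obtain ⟨hαpos, hαsub⟩ := hα
  have hmem : E.mulVec (α • d) ∈ X := hαsub (mulVec_smul_mem_Rinf A E D α d hdD)
  have hnorm : ‖E.mulVec (α • d)‖ = α * ‖E.mulVec d‖ := by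
    rw [Matrix.mulVec_smul, norm_smul, Real.norm_eq_abs, abs_of_pos hαpos]
  have := hC _ hmem
  rw [hnorm] at this
  rw [le_div_iff₀ hwpos]
  exact this

theorem alphaStar_lower_bound {n m r : ℕ} (hrn : r ≤ n)
    (A : Matrix (Fin n) (Fin n) ℝ) (E : Matrix (Fin n) (Fin m) ℝ)
    (X : Set (Fin n → ℝ)) (D : Set (Fin m → ℝ))
    (hA1 : Assumption1 hrn A E X D) (hA2 : Assumption2 hrn A)
    (ε : ℝ) (hε : 0 < ε) (k : ℕ)
    (hk : Rinf A E D 1 ⊆ (1 + ε) • Rseq A E D 1 k) :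
    (1 + ε)⁻¹ * sSup {α : ℝ | 0 < α ∧ α • Rseq A E D 1 k ⊆ X} ≤ alphaStar A E X D := by
  have h1ε : (0:ℝ) < 1 + ε := by linarith
  set S : Set ℝ := {α : ℝ | 0 < α ∧ Rinf A E D α ⊆ X} with hS
  have hSbdd : BddAbove S := bddAbove_alphaSet hrn A E X D hA1
  have hSnn : 0 ≤ sSup S := Real.sSup_nonneg fun x hx => hx.1.le
  have key : sSup {α : ℝ | 0 < α ∧ α • Rseq A E D 1 k ⊆ X} ≤ (1 + ε) * sSup S := by
    apply Real.sSup_le _ (by positivity)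
    rintro α ⟨hαpos, hαsub⟩
    have hβ : α / (1 + ε) ∈ S := by
      refine ⟨div_pos hαpos h1ε, ?_⟩
      calc Rinf A E D (α / (1 + ε)) = (α / (1 + ε)) • Rinf A E D 1 := Rinf_smul A E D _
        _ ⊆ (α / (1 + ε)) • ((1 + ε) • Rseq A E D 1 k) := Set.smul_set_mono hk
        _ = α • Rseq A E D 1 k := by rw [smul_smul, div_mul_cancel₀ α h1ε.ne']
        _ ⊆ X := hαsub
    have h2 : α / (1 + ε) ≤ sSup S := le_csSup hSbdd hβ
    calc α = (1 + ε) * (α / (1 + ε)) := by field_simp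
      _ ≤ (1 + ε) * sSup S := by nlinarith
  rw [alphaStar, ← hS, inv_mul_le_iff₀ h1ε]
  exact key

end RPIScaling
end

section
/- Under Assumptions 1 and 2, let η ∈ (0,1) and let M ∈ {1,…,r} be such that W := ⨁_{k=0}^{M−1} A₁₁^k·E₁·𝒟* is a C-set in ℝ^r. If N ∈ ℕ with N ≥ 1 satisfies A₁₁^{M·N}·W ⊆ η • W, then, setting k = M·N, it holds that R_∞^1 ⊆ (1−η)⁻¹ • R_k^1. -/
open Matrix Set Pointwise

namespace RPIScaling

section Aux
open Finset

variable {p q : ℕ}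

/-- Characterization of reachable sets as sums of matrix-weighted disturbances. -/
def SS (B : Matrix (Fin p) (Fin p) ℝ) (F : Matrix (Fin p) (Fin q) ℝ)
    (D : Set (Fin q → ℝ)) (k : ℕ) : Set (Fin p → ℝ) :=
  {w | ∃ d : ℕ → Fin q → ℝ, (∀ i, d i ∈ D) ∧
    w = ∑ i ∈ Finset.range k, (B ^ i * F).mulVec (d i)}

variable {B : Matrix (Fin p) (Fin p) ℝ} {F : Matrix (Fin p) (Fin q) ℝ}
  {D : Set (Fin q → ℝ)}

lemma term_pull (a i : ℕ) (v : Fin q → ℝ) :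
    (B ^ (a + i) * F).mulVec v = (B ^ a).mulVec ((B ^ i * F).mulVec v) := by
  rw [pow_add, Matrix.mul_assoc, ← Matrix.mulVec_mulVec]

lemma mulVec_sum {a b : ℕ} {s : Finset ℕ} (C : Matrix (Fin a) (Fin b) ℝ)
    (f : ℕ → Fin b → ℝ) :
    C.mulVec (∑ i ∈ s, f i) = ∑ i ∈ s, C.mulVec (f i) := by
  ext j
  simp only [Matrix.mulVec, dotProduct, Finset.sum_apply, Finset.mul_sum]
  rw [Finset.sum_comm]

lemma SS_zero_mem (h0 : (0 : Fin q → ℝ) ∈ D) (k : ℕ) : (0 : Fin p → ℝ) ∈ SS B F D k :=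
  ⟨fun _ => 0, fun _ => h0, by simp⟩

lemma SS_convex (hD : Convex ℝ D) (k : ℕ) : Convex ℝ (SS B F D k) := by
  rintro x ⟨d, hd, rfl⟩ y ⟨e, he, rfl⟩ a b ha hb hab
  refine ⟨fun i => a • d i + b • e i, fun i => hD (hd i) (he i) ha hb hab, ?_⟩
  rw [Finset.smul_sum, Finset.smul_sum, ← Finset.sum_add_distrib]
  refine Finset.sum_congr rfl fun i _ => ?_
  rw [Matrix.mulVec_add, Matrix.mulVec_smul, Matrix.mulVec_smul]

lemma SS_mono (h0 : (0 : Fin q → ℝ) ∈ D) {k l : ℕ} (hkl : k ≤ l) :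
    SS B F D k ⊆ SS B F D l := by
  rintro x ⟨d, hd, rfl⟩
  refine ⟨fun i => if i < k then d i else 0,
    fun i => by dsimp only; split <;> [exact hd i; exact h0], ?_⟩
  rw [← Finset.sum_subset (Finset.range_subset_range.2 hkl)]
  · exact Finset.sum_congr rfl fun i hi => by
      dsimp only; rw [if_pos (Finset.mem_range.1 hi)]
  · intro i _ hi
    dsimp only
    rw [if_neg (fun h => hi (Finset.mem_range.2 h)), Matrix.mulVec_zero]

lemma SS_split (a b : ℕ) :
    SS B F D (a + b) ⊆ SS B F D a + (B ^ a).mulVec '' SS B F D b := by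
  rintro x ⟨d, hd, rfl⟩
  rw [Finset.sum_range_add]
  refine Set.add_mem_add ⟨d, hd, rfl⟩
    ⟨∑ i ∈ Finset.range b, (B ^ i * F).mulVec (d (a + i)),
      ⟨fun i => d (a + i), fun i => hd _, rfl⟩, ?_⟩
  rw [mulVec_sum]
  exact Finset.sum_congr rfl fun i _ => (term_pull a i _).symm

lemma sum_range_mul_eq {V : Type*} [AddCommMonoid V] (M : ℕ) (f : ℕ → V) :
    ∀ N : ℕ, ∑ i ∈ Finset.range (M * N), f i
      = ∑ t ∈ Finset.range N, ∑ s ∈ Finset.range M, f (M * t + s)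
  | 0 => by simp
  | N + 1 => by
    rw [Nat.mul_succ, Finset.sum_range_add, sum_range_mul_eq M f N, Finset.sum_range_succ]

lemma SS_combine (M N : ℕ) (hM : 0 < M)
    (u : ℕ → Fin p → ℝ) (hu : ∀ t, u t ∈ SS B F D M) :
    ∑ t ∈ Finset.range N, (B ^ (M * t)).mulVec (u t) ∈ SS B F D (M * N) := by
  choose dd hdd hsum using hu
  refine ⟨fun i => dd (i / M) (i % M), fun i => hdd _ _, ?_⟩
  rw [sum_range_mul_eq]
  refine Finset.sum_congr rfl fun t _ => ?_
  rw [hsum t, mulVec_sum]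
  refine Finset.sum_congr rfl fun s hs => ?_
  rw [← term_pull]
  have h1 : dd ((M * t + s) / M) ((M * t + s) % M) = dd t s := by
    rw [Nat.mul_add_div hM, Nat.div_eq_of_lt (Finset.mem_range.1 hs), Nat.add_zero,
      Nat.mul_add_mod, Nat.mod_eq_of_lt (Finset.mem_range.1 hs)]
  dsimp only
  rw [h1]

lemma term_pull' (i : ℕ) (v : Fin q → ℝ) :
    (B ^ (i + 1) * F).mulVec v = B.mulVec ((B ^ i * F).mulVec v) := by
  rw [Nat.add_comm, term_pull, pow_one]

lemma SS_succ (k : ℕ) :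
    SS B F D (k + 1) = B.mulVec '' SS B F D k + F.mulVec '' D := by
  ext x
  constructor
  · rintro ⟨d, hd, rfl⟩
    rw [Finset.sum_range_succ']
    have h1 : ∑ i ∈ Finset.range k, (B ^ (i + 1) * F).mulVec (d (i + 1))
        = B.mulVec (∑ i ∈ Finset.range k, (B ^ i * F).mulVec (d (i + 1))) := by
      rw [mulVec_sum]
      exact Finset.sum_congr rfl fun i _ => term_pull' i _
    rw [h1, pow_zero, Matrix.one_mul]
    exact Set.add_mem_add (Set.mem_image_of_mem _ ⟨fun i => d (i + 1), fun i => hd _, rfl⟩)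
      (Set.mem_image_of_mem _ (hd 0))
  · rintro ⟨-, ⟨w, ⟨d, hd, rfl⟩, rfl⟩, -, ⟨e, he, rfl⟩, rfl⟩
    refine ⟨fun i => Nat.casesOn i e fun j => d j, fun i => by cases i <;> simp [he, hd], ?_⟩
    show _ = ∑ i ∈ Finset.range (k + 1), (B ^ i * F).mulVec
      ((fun i => Nat.casesOn i e fun j => d j : ℕ → Fin q → ℝ) i)
    rw [Finset.sum_range_succ']
    show B.mulVec (∑ i ∈ Finset.range k, (B ^ i * F).mulVec (d i)) + F.mulVec e
      = (∑ i ∈ Finset.range k, (B ^ (i + 1) * F).mulVec (d i)) + (B ^ 0 * F).mulVec e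
    rw [pow_zero, Matrix.one_mul, mulVec_sum]
    congr 1
    exact Finset.sum_congr rfl fun i _ => (term_pull' i _).symm

/-- Embedding matrix of `ℝ^r` into `ℝ^n`. -/
def Jmat (n r : ℕ) : Matrix (Fin n) (Fin r) ℝ :=
  Matrix.of fun i j => if (i : ℕ) = (j : ℕ) then 1 else 0

lemma AJ_eq {n r : ℕ} (hrn : r ≤ n) (A : Matrix (Fin n) (Fin n) ℝ)
    (hA : ∀ i j : Fin n, r ≤ (i : ℕ) → (j : ℕ) < r → A i j = 0) :
    A * Jmat n r = Jmat n r * blockA11 hrn A := by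
  ext i j
  rw [Matrix.mul_apply, Matrix.mul_apply]
  have hL : ∑ k : Fin n, A i k * Jmat n r k j = A i (Fin.castLE hrn j) := by
    rw [Finset.sum_eq_single (Fin.castLE hrn j)]
    · simp [Jmat]
    · intro b _ hb
      have hb' : ¬((b : ℕ) = (j : ℕ)) := fun h => hb (Fin.ext h)
      simp [Jmat, hb']
    · simp
  rw [hL]
  by_cases hi : (i : ℕ) < r
  · have hR : ∑ k : Fin r, Jmat n r i k * blockA11 hrn A k j
        = blockA11 hrn A ⟨(i : ℕ), hi⟩ j := by
      rw [Finset.sum_eq_single ⟨(i : ℕ), hi⟩]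
      · simp [Jmat]
      · intro b _ hb
        have hb' : ¬((i : ℕ) = (b : ℕ)) := fun h => hb (Fin.ext h.symm)
        simp [Jmat, hb']
      · simp
    rw [hR]
    have hcast : Fin.castLE hrn ⟨(i : ℕ), hi⟩ = i := Fin.ext rfl
    show A i (Fin.castLE hrn j) = A (Fin.castLE hrn ⟨(i : ℕ), hi⟩) (Fin.castLE hrn j)
    rw [hcast]
  · rw [hA i (Fin.castLE hrn j) (le_of_not_gt hi) j.2]
    symm
    apply Finset.sum_eq_zero
    intro b _
    have hb' : ¬((i : ℕ) = (b : ℕ)) := fun h => hi (h ▸ b.2)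
    simp [Jmat, hb']

lemma EJ_eq {n m' r : ℕ} (hrn : r ≤ n) (E : Matrix (Fin n) (Fin m') ℝ)
    (hE : ∀ i : Fin n, r ≤ (i : ℕ) → ∀ j, E i j = 0) :
    E = Jmat n r * blockE1 hrn E := by
  ext i p
  rw [Matrix.mul_apply]
  by_cases hi : (i : ℕ) < r
  · rw [Finset.sum_eq_single ⟨(i : ℕ), hi⟩]
    · have hcast : Fin.castLE hrn ⟨(i : ℕ), hi⟩ = i := Fin.ext rfl
      show E i p = Jmat n r i ⟨(i : ℕ), hi⟩ * E (Fin.castLE hrn ⟨(i : ℕ), hi⟩) p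
      rw [hcast]
      simp [Jmat]
    · intro b _ hb
      have hb' : ¬((i : ℕ) = (b : ℕ)) := fun h => hb (Fin.ext h.symm)
      simp [Jmat, hb']
    · simp
  · rw [hE i (le_of_not_gt hi) p]
    symm
    apply Finset.sum_eq_zero
    intro b _
    have hb' : ¬((i : ℕ) = (b : ℕ)) := fun h => hi (h ▸ b.2)
    simp [Jmat, hb']

lemma powJ {n r : ℕ} {A : Matrix (Fin n) (Fin n) ℝ} {B' : Matrix (Fin r) (Fin r) ℝ}
    (hAJ : A * Jmat n r = Jmat n r * B') : ∀ k, A ^ k * Jmat n r = Jmat n r * B' ^ k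
  | 0 => by simp
  | k + 1 => by
    rw [pow_succ, pow_succ, Matrix.mul_assoc, hAJ, ← Matrix.mul_assoc, powJ hAJ,
      Matrix.mul_assoc]

lemma SS_image {n r : ℕ} {A : Matrix (Fin n) (Fin n) ℝ} {E : Matrix (Fin n) (Fin q) ℝ}
    {B' : Matrix (Fin r) (Fin r) ℝ} {F1 : Matrix (Fin r) (Fin q) ℝ} {D : Set (Fin q → ℝ)}
    (hterm : ∀ k : ℕ, A ^ k * E = Jmat n r * (B' ^ k * F1)) (k : ℕ) :
    SS A E D k = (Jmat n r).mulVec '' SS B' F1 D k := by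
  ext x
  constructor
  · rintro ⟨d, hd, rfl⟩
    refine ⟨∑ i ∈ Finset.range k, (B' ^ i * F1).mulVec (d i), ⟨d, hd, rfl⟩, ?_⟩
    rw [mulVec_sum]
    exact Finset.sum_congr rfl fun i _ => by rw [Matrix.mulVec_mulVec, ← hterm]
  · rintro ⟨w, ⟨d, hd, rfl⟩, rfl⟩
    refine ⟨d, hd, ?_⟩
    rw [mulVec_sum]
    exact (Finset.sum_congr rfl fun i _ => by rw [Matrix.mulVec_mulVec, ← hterm]).symm

lemma Rseq_eq_SS {n : ℕ} {A : Matrix (Fin n) (Fin n) ℝ} {E : Matrix (Fin n) (Fin q) ℝ}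
    {D : Set (Fin q → ℝ)} (h0 : (0 : Fin q → ℝ) ∈ D) :
    ∀ k, Rseq A E D 1 k = SS A E D k
  | 0 => by
    ext x
    simp only [Rseq]
    constructor
    · rintro rfl
      exact SS_zero_mem h0 0
    · rintro ⟨d, hd, rfl⟩
      simp
  | k + 1 => by
    show A.mulVec '' (Rseq A E D 1 k) + E.mulVec '' ((1 : ℝ) • D) = _
    rw [one_smul, Rseq_eq_SS h0 k, SS_succ]

lemma mulVec_image_smul_s19 {a b : ℕ} (C : Matrix (Fin a) (Fin b) ℝ) (c : ℝ)
    (S : Set (Fin b → ℝ)) : C.mulVec '' (c • S) = c • (C.mulVec '' S) := by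
  ext x
  constructor
  · rintro ⟨-, ⟨w, hw, rfl⟩, rfl⟩
    exact ⟨C.mulVec w, Set.mem_image_of_mem _ hw, (Matrix.mulVec_smul C c w).symm⟩
  · rintro ⟨-, ⟨w, hw, rfl⟩, rfl⟩
    exact ⟨c • w, Set.smul_mem_smul_set hw, Matrix.mulVec_smul C c w⟩

lemma smul_subset_smul_of_le {a b : ℝ} {S : Set (Fin p → ℝ)} (hS : Convex ℝ S)
    (h0 : (0 : Fin p → ℝ) ∈ S) (ha : 0 ≤ a) (hab : a ≤ b) : a • S ⊆ b • S := by
  rintro - ⟨x, hx, rfl⟩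
  rcases eq_or_lt_of_le (ha.trans hab) with hb | hb
  · have haz : a = 0 := le_antisymm (hab.trans hb.symm.le) ha
    refine Set.mem_smul_set.2 ⟨0, h0, ?_⟩
    show b • (0 : Fin p → ℝ) = a • x
    rw [haz, ← hb, zero_smul, zero_smul]
  · have hmem : (a / b) • x ∈ S := by
      have h2 := hS hx h0 (div_nonneg ha hb.le) (sub_nonneg.2 ((div_le_one hb).2 hab))
        (by ring)
      simpa using h2
    refine Set.mem_smul_set.2 ⟨(a / b) • x, hmem, ?_⟩
    show b • ((a / b) • x) = a • x
    rw [smul_smul, mul_div_cancel₀ a hb.ne']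

end Aux


section Main
open Finset

lemma Wset_eq {n m r : ℕ} (hrn : r ≤ n) (A : Matrix (Fin n) (Fin n) ℝ)
    (E : Matrix (Fin n) (Fin m) ℝ) {D : Set (Fin m → ℝ)} (h0 : (0 : Fin m → ℝ) ∈ D)
    (M : ℕ) : Wset hrn A E D M = SS (blockA11 hrn A) (blockE1 hrn E) D M := by
  ext x
  constructor
  · rintro ⟨d, hd, rfl⟩
    refine ⟨fun i => if h : i < M then d ⟨i, h⟩ else 0,
      fun i => by dsimp only; split <;> [exact hd _; exact h0], ?_⟩
    rw [Finset.sum_range]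
    refine Finset.sum_congr rfl fun i _ => ?_
    dsimp only
    rw [dif_pos i.isLt, Fin.eta]
  · rintro ⟨d, hd, rfl⟩
    refine ⟨fun i => d i, fun i => hd _, ?_⟩
    rw [Finset.sum_range]

lemma SS_contract {p q : ℕ} {B : Matrix (Fin p) (Fin p) ℝ} {F : Matrix (Fin p) (Fin q) ℝ}
    {D : Set (Fin q → ℝ)} {η : ℝ} (M N : ℕ) (hM : 0 < M)
    (hNW : ∀ w ∈ SS B F D M, (B ^ (M * N)).mulVec w ∈ η • SS B F D M) :
    ∀ x ∈ SS B F D (M * N), (B ^ (M * N)).mulVec x ∈ η • SS B F D (M * N) := by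
  rintro x ⟨d, hd, rfl⟩
  set K := M * N with hK
  set w : ℕ → Fin p → ℝ := fun t => ∑ s ∈ Finset.range M, (B ^ s * F).mulVec (d (M * t + s))
    with hwdef
  have hw : ∀ t, w t ∈ SS B F D M := fun t => ⟨fun s => d (M * t + s), fun s => hd _, rfl⟩
  choose u hu hequ using fun t => Set.mem_smul_set.1 (hNW _ (hw t))
  have hswap : ∀ (a b c : ℕ) (v : Fin q → ℝ),
      (B ^ a).mulVec ((B ^ (b + c) * F).mulVec v)
        = (B ^ b).mulVec ((B ^ a).mulVec ((B ^ c * F).mulVec v)) := by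
    intro a b c v
    simp only [Matrix.mulVec_mulVec, ← Matrix.mul_assoc, ← pow_add]
    rw [show a + (b + c) = b + (a + c) by omega]
  have h1 : (B ^ K).mulVec (∑ i ∈ Finset.range K, (B ^ i * F).mulVec (d i))
      = ∑ t ∈ Finset.range N, (B ^ (M * t)).mulVec ((B ^ K).mulVec (w t)) := by
    rw [mulVec_sum, hK, sum_range_mul_eq M _ N]
    refine Finset.sum_congr rfl fun t _ => ?_
    rw [hwdef]
    dsimp only
    rw [mulVec_sum, mulVec_sum]
    refine Finset.sum_congr rfl fun s _ => ?_
    exact hswap (M * N) (M * t) s _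
  rw [h1]
  have h2 : ∑ t ∈ Finset.range N, (B ^ (M * t)).mulVec ((B ^ K).mulVec (w t))
      = η • ∑ t ∈ Finset.range N, (B ^ (M * t)).mulVec (u t) := by
    rw [Finset.smul_sum]
    refine Finset.sum_congr rfl fun t _ => ?_
    rw [← hequ t, Matrix.mulVec_smul]
  rw [h2]
  exact Set.smul_mem_smul_set (SS_combine M N hM u hu)

lemma SS_geom {p q : ℕ} {B : Matrix (Fin p) (Fin p) ℝ} {F : Matrix (Fin p) (Fin q) ℝ}
    {D : Set (Fin q → ℝ)} {η : ℝ} (hη0 : 0 < η) (hDconv : Convex ℝ D)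
    (h0 : (0 : Fin q → ℝ) ∈ D) (K : ℕ)
    (hcontract : ∀ x ∈ SS B F D K, (B ^ K).mulVec x ∈ η • SS B F D K) :
    ∀ t, SS B F D (K * t) ⊆ (∑ s ∈ Finset.range t, η ^ s) • SS B F D K := by
  intro t
  induction t with
  | zero =>
    rintro x ⟨d, hd, hx⟩
    have hx0 : x = 0 := by simpa using hx
    rw [Finset.sum_range_zero, Set.zero_smul_set ⟨0, SS_zero_mem h0 K⟩]
    simp [hx0]
  | succ t ih =>
    intro x hx
    have hidx : K * (t + 1) = K + K * t := by ring
    rw [hidx] at hx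
    obtain ⟨y, hy, z, hz, rfl⟩ := SS_split K (K * t) hx
    obtain ⟨wv, hwv, rfl⟩ := hz
    obtain ⟨v, hv, rfl⟩ := Set.mem_smul_set.1 (ih hwv)
    obtain ⟨u, hu, hequ⟩ := Set.mem_smul_set.1 (hcontract v hv)
    have hc0 : (0 : ℝ) ≤ ∑ s ∈ Finset.range t, η ^ s :=
      Finset.sum_nonneg fun i _ => pow_nonneg hη0.le i
    have hterm : (B ^ K).mulVec ((∑ s ∈ Finset.range t, η ^ s) • v)
        = ((∑ s ∈ Finset.range t, η ^ s) * η) • u := by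
      rw [Matrix.mulVec_smul, ← hequ, smul_smul]
    have hc : (∑ s ∈ Finset.range (t + 1), η ^ s)
        = 1 + (∑ s ∈ Finset.range t, η ^ s) * η := by
      rw [Finset.sum_range_succ', pow_zero]
      simp only [pow_succ, ← Finset.sum_mul]
      ring
    rw [hterm, hc, (SS_convex hDconv K).add_smul zero_le_one (mul_nonneg hc0 hη0.le),
      one_smul]
    exact Set.add_mem_add hy (Set.smul_mem_smul_set hu)

end Main

theorem rinf_outer_approx {n m r : ℕ} (hrn : r ≤ n)
    (A : Matrix (Fin n) (Fin n) ℝ) (E : Matrix (Fin n) (Fin m) ℝ)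
    (X : Set (Fin n → ℝ)) (D : Set (Fin m → ℝ))
    (hA1 : Assumption1 hrn A E X D) (hA2 : Assumption2 hrn A)
    (η : ℝ) (hη0 : 0 < η) (hη1 : η < 1) (M : ℕ) (hM1 : 1 ≤ M) (hMr : M ≤ r)
    (hW : IsCSet (Wset hrn A E D M)) (N : ℕ) (hN1 : 1 ≤ N)
    (hN : (blockA11 hrn A ^ (M * N)).mulVec '' Wset hrn A E D M ⊆ η • Wset hrn A E D M) :
    Rinf A E D 1 ⊆ (1 - η)⁻¹ • Rseq A E D 1 (M * N) := by
  have h0D : (0 : Fin m → ℝ) ∈ D := interior_subset hA1.hD.2.2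
  have hDconv : Convex ℝ D := hA1.hD.1
  have hAJ := AJ_eq hrn A hA1.lowerLeftA
  have hEJ := EJ_eq hrn E hA1.lowerE
  have hterm : ∀ k : ℕ,
      A ^ k * E = Jmat n r * (blockA11 hrn A ^ k * blockE1 hrn E) := by
    intro k
    conv_lhs => rw [hEJ]
    rw [← Matrix.mul_assoc, powJ hAJ k, Matrix.mul_assoc]
  have hM0 : 0 < M := hM1
  have hK0 : 0 < M * N := Nat.mul_pos hM0 hN1
  rw [Wset_eq hrn A E h0D M] at hN
  have hNW : ∀ w ∈ SS (blockA11 hrn A) (blockE1 hrn E) D M,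
      ((blockA11 hrn A) ^ (M * N)).mulVec w
        ∈ η • SS (blockA11 hrn A) (blockE1 hrn E) D M :=
    fun w hw => hN (Set.mem_image_of_mem _ hw)
  have hcontract := SS_contract M N hM0 hNW
  have hgeom := SS_geom hη0 hDconv h0D (M * N) hcontract
  have h1η : (0 : ℝ) < 1 - η := by linarith
  intro x hx
  obtain ⟨k, hk⟩ := Set.mem_iUnion.1 hx
  rw [Rseq_eq_SS h0D k, SS_image hterm k] at hk
  obtain ⟨w, hw, rfl⟩ := hk
  have hw2 : w ∈ SS (blockA11 hrn A) (blockE1 hrn E) D (M * N * k) :=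
    SS_mono h0D (Nat.le_mul_of_pos_left k hK0) hw
  have hw3 := hgeom k hw2
  have hcle : (∑ s ∈ Finset.range k, η ^ s) ≤ (1 - η)⁻¹ := by
    have hgs := geom_sum_mul η k
    rw [inv_eq_one_div, le_div_iff₀ h1η]
    nlinarith [pow_nonneg hη0.le k]
  have hc0 : (0 : ℝ) ≤ ∑ s ∈ Finset.range k, η ^ s :=
    Finset.sum_nonneg fun i _ => pow_nonneg hη0.le i
  have hw4 : w ∈ (1 - η)⁻¹ • SS (blockA11 hrn A) (blockE1 hrn E) D (M * N) :=
    smul_subset_smul_of_le (SS_convex hDconv (M * N)) (SS_zero_mem h0D (M * N))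
      hc0 hcle hw3
  obtain ⟨u, hu, hueq⟩ := Set.mem_smul_set.1 hw4
  rw [Rseq_eq_SS h0D (M * N), SS_image hterm (M * N)]
  refine Set.mem_smul_set.2 ⟨(Jmat n r).mulVec u, Set.mem_image_of_mem _ hu, ?_⟩
  rw [← Matrix.mulVec_smul, hueq]

end RPIScaling
end
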